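/- (Hutchinson lemma) Let (M, ρ) be a metric space and f₁, …, f_k : M → M maps. Suppose there exist compact sets D ⊆ Z ⊆ M such that fᵢ(Z) ⊆ Z for all i, each fᵢ is a contraction on Z (with a common ratio λ < 1), and D ⊆ ⋃ᵢ fᵢ(D). Then for the attractor K of the iterated function system and for every open set U with U ∩ D ≠ ∅, there exists a finite word w = ω₁…ω_m such that f_{ω₁} ∘ ⋯ ∘ f_{ω_m}(Z) ⊆ U. -/

import Mathlib

open Metric Set Function

/-- Composition `f_{ω₁} ∘ ⋯ ∘ f_{ω_m}` along a word. -/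
def wordComp {M : Type*} {k : ℕ} (f : Fin k → M → M) : List (Fin k) → M → M
  | [] => id
  | i :: l => f i ∘ wordComp f l

/-- Hutchinson's lemma: if `D ⊆ Z` are compact, each `fᵢ` maps `Z` into `Z`
and is a `λ`-contraction on `Z` with `λ < 1`, and `D ⊆ ⋃ᵢ fᵢ(D)`, then for
every open set `U` meeting `D` there is a nonempty finite word `w` with
`f_{ω₁} ∘ ⋯ ∘ f_{ω_m}(Z) ⊆ U`. -/
theorem hutchinson_lemma
    {M : Type*} [MetricSpace M] {k : ℕ} (f : Fin k → M → M)
    (D Z : Set M) (hD : IsCompact D) (hZ : IsCompact Z) (hDZ : D ⊆ Z)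
    (hmaps : ∀ i, f i '' Z ⊆ Z)
    (lam : ℝ) (hlam0 : 0 ≤ lam) (hlam : lam < 1)
    (hcontr : ∀ i, ∀ x ∈ Z, ∀ y ∈ Z, dist (f i x) (f i y) ≤ lam * dist x y)
    (hcover : D ⊆ ⋃ i, f i '' D) :
    ∀ U : Set M, IsOpen U → (U ∩ D).Nonempty →
      ∃ w : List (Fin k), w ≠ [] ∧ wordComp f w '' Z ⊆ U := by
  -- basic facts about wordComp on Z
  have hmem : ∀ (w : List (Fin k)) (y : M), y ∈ Z → wordComp f w y ∈ Z := by
    intro w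
    induction w with
    | nil => intro y hy; exact hy
    | cons i l ih =>
      intro y hy
      exact hmaps i ⟨wordComp f l y, ih y hy, rfl⟩
  have hdist : ∀ (w : List (Fin k)) (y z : M), y ∈ Z → z ∈ Z →
      dist (wordComp f w y) (wordComp f w z) ≤ lam ^ w.length * dist y z := by
    intro w
    induction w with
    | nil => intro y z _ _; simp [wordComp]
    | cons i l ih =>
      intro y z hy hz
      calc dist (wordComp f (i :: l) y) (wordComp f (i :: l) z)
          ≤ lam * dist (wordComp f l y) (wordComp f l z) :=
            hcontr i _ (hmem l y hy) _ (hmem l z hz)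
        _ ≤ lam * (lam ^ l.length * dist y z) := by
            exact mul_le_mul_of_nonneg_left (ih y z hy hz) hlam0
        _ = lam ^ (i :: l).length * dist y z := by simp [pow_succ]; ring
  intro U hU ⟨x0, hx0U, hx0D⟩
  -- backward orbit in D
  have step : ∀ x ∈ D, ∃ p : Fin k × M, p.2 ∈ D ∧ f p.1 p.2 = x := by
    intro x hx
    rcases mem_iUnion.1 (hcover hx) with ⟨i, y, hyD, hyx⟩
    exact ⟨(i, y), hyD, hyx⟩
  let next : {x : M // x ∈ D} → Fin k × {x : M // x ∈ D} := fun x =>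
    ⟨(step x.1 x.2).choose.1, (step x.1 x.2).choose.2, (step x.1 x.2).choose_spec.1⟩
  let seq : ℕ → {x : M // x ∈ D} := fun n => Nat.rec ⟨x0, hx0D⟩ (fun _ x => (next x).2) n
  let idx : ℕ → Fin k := fun n => (next (seq n)).1
  have hstep : ∀ n, f (idx n) (seq (n+1)).1 = (seq n).1 := fun n =>
    (step (seq n).1 (seq n).2).choose_spec.2
  -- the word recovers x0
  have hword : ∀ m, wordComp f (List.ofFn (fun j : Fin m => idx j)) (seq m).1 = x0 := by
    have key : ∀ m n, wordComp f (List.ofFn (fun j : Fin m => idx (n + j))) (seq (n + m)).1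
        = (seq n).1 := by
      intro m
      induction m with
      | zero => intro n; simp [wordComp]
      | succ m ih =>
        intro n
        rw [List.ofFn_succ]
        show f (idx (n + 0)) (wordComp f (List.ofFn fun j : Fin m => idx (n + (j.1 + 1)))
          (seq (n + (m + 1))).1) = (seq n).1
        have h1 : (List.ofFn fun j : Fin m => idx (n + (j.1 + 1)))
            = List.ofFn fun j : Fin m => idx ((n + 1) + j.1) := by
          apply congrArg; funext j; apply congrArg; omega
        have h2 : n + (m + 1) = (n + 1) + m := by omega
        rw [h1, h2, ih (n + 1)]
        simpa using hstep n
    intro m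
    have h := key m 0
    simp at h
    exact h
  -- pick m large
  rcases isOpen_iff.1 hU x0 hx0U with ⟨ε, hε, hball⟩
  obtain ⟨C, hC⟩ : ∃ C, ∀ y ∈ Z, ∀ z ∈ Z, dist y z ≤ C := by
    refine ⟨diam Z, fun y hy z hz => dist_le_diam_of_mem hZ.isBounded hy hz⟩
  have hCpos : 0 ≤ C := by
    have := hC x0 (hDZ hx0D) x0 (hDZ hx0D)
    simpa using this
  obtain ⟨n, hn⟩ : ∃ n, lam ^ n * (C + 1) < ε := by
    have hC1 : (0:ℝ) < C + 1 := by linarith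
    rcases exists_pow_lt_of_lt_one (div_pos hε hC1) hlam with ⟨n, hn⟩
    refine ⟨n, ?_⟩
    exact (lt_div_iff₀ (show (0:ℝ) < C + 1 by linarith)).1 hn
  set m := n + 1
  have hlm : lam ^ m ≤ lam ^ n := pow_le_pow_of_le_one hlam0 hlam.le (by omega)
  refine ⟨List.ofFn (fun j : Fin m => idx j), by simp [m], ?_⟩
  rintro _ ⟨z, hz, rfl⟩
  apply hball
  have hm : (List.ofFn (fun j : Fin m => idx j)).length = m := by simp [m]
  have hd := hdist (List.ofFn (fun j : Fin m => idx j)) z (seq m).1 hz (hDZ (seq m).2)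
  rw [hm, hword m] at hd
  have hzC : dist z (seq m).1 ≤ C := hC z hz _ (hDZ (seq m).2)
  have hlmn : (0:ℝ) ≤ lam ^ m := pow_nonneg hlam0 m
  calc dist (wordComp f (List.ofFn fun j : Fin m => idx j) z) x0
      ≤ lam ^ m * dist z (seq m).1 := hd
    _ ≤ lam ^ n * (C + 1) := by
        have : lam ^ m * dist z (seq m).1 ≤ lam ^ m * (C + 1) :=
          mul_le_mul_of_nonneg_left (by linarith) hlmn
        have h2 : lam ^ m * (C + 1) ≤ lam ^ n * (C + 1) :=
          mul_le_mul_of_nonneg_right hlm (by linarith)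
        linarith
    _ < ε := hn
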